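/- For a single Markov function (m = 1): let σ ∈ 𝓜(Δ) and w a real polynomial with zeros in ℂ∖Δ such that ℓ₀ + ℓ₁σ̂ vanishes at the zeros of w (with multiplicity) and (ℓ₀ + ℓ₁σ̂)(z)/w(z) = O(1/z^N), N ≥ 1, as z → ∞. Then (ℓ₀(z) + ℓ₁(z)σ̂(z))/w(z) = ∫ ℓ₁(x)/(z−x) · dσ(x)/w(x) for all z ∈ ℂ∖Δ outside the zeros of w. -/

import Mathlib

open MeasureTheory Polynomial

/-- Topological support of a measure on ℝ. -/
def msupport (σ : Measure ℝ) : Set ℝ := {x : ℝ | ∀ U ∈ nhds x, σ U ≠ 0}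

/-- The Cauchy transform `σ̂(z) = ∫ dσ(x)/(z-x)`. -/
noncomputable def cauchyT (σ : Measure ℝ) (z : ℂ) : ℂ := ∫ x, (z - (x : ℂ))⁻¹ ∂σ


open Finset Metric Filter

lemma msupport_ae (σ : Measure ℝ) {s : Set ℝ} (hs : msupport σ ⊆ s) :
    ∀ᵐ x ∂σ, x ∈ s := by
  rw [MeasureTheory.ae_iff]
  have h1 : {x : ℝ | ¬ x ∈ s} ⊆ (msupport σ)ᶜ := fun x hx hm => hx (hs hm)
  have h2 : σ ((msupport σ)ᶜ) = 0 := by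
    apply le_antisymm _ (zero_le)
    have hf : ∀ x ∈ (msupport σ)ᶜ, ∃ U, U ∈ nhds x ∧ σ U = 0 := by
      intro x hx
      simp only [msupport, Set.mem_compl_iff, Set.mem_setOf_eq, not_forall] at hx
      obtain ⟨U, hU, hU0⟩ := hx
      exact ⟨U, hU, by simpa using hU0⟩
    choose! U hU hU0 using hf
    obtain ⟨t, hts, htc, hcov⟩ := TopologicalSpace.countable_cover_nhdsWithin
      (f := U) (s := (msupport σ)ᶜ) (fun x hx => nhdsWithin_le_nhds (hU x hx))
    calc σ ((msupport σ)ᶜ) ≤ σ (⋃ x ∈ t, U x) := measure_mono hcov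
    _ = 0 := by
        rw [measure_biUnion_null_iff htc]
        exact fun x hx => hU0 x (hts hx)
  exact measure_mono_null h1 h2

lemma eval_map_coe (p : Polynomial ℝ) (x : ℝ) :
    (p.map (algebraMap ℝ ℂ)).eval (x : ℂ) = ((p.eval x : ℝ) : ℂ) := by
  rw [← Complex.coe_algebraMap, eval_map, eval₂_at_apply]

lemma eval_map_sum (p : Polynomial ℝ) (D : ℕ) (hD : p.natDegree < D + 1) (u : ℂ) :
    (p.map (algebraMap ℝ ℂ)).eval u = ∑ j ∈ range (D+1), ((p.coeff j : ℝ) : ℂ) * u ^ j := by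
  rw [eval_eq_sum_range' (lt_of_le_of_lt (natDegree_map_le) hD)]
  simp [coeff_map]

lemma aux_q (ℓ₁ w : Polynomial ℝ) (z : ℂ) (x : ℝ) :
    (z - (x:ℂ)) * (∑ j ∈ range (max ℓ₁.natDegree w.natDegree + 1),
        (((ℓ₁.coeff j : ℝ):ℂ) * ((w.eval x : ℝ):ℂ) - ((w.coeff j : ℝ):ℂ) * ((ℓ₁.eval x : ℝ):ℂ))
          * ∑ k ∈ range j, z ^ k * (x:ℂ) ^ (j - 1 - k))
      = (ℓ₁.map (algebraMap ℝ ℂ)).eval z * ((w.eval x : ℝ):ℂ)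
        - (w.map (algebraMap ℝ ℂ)).eval z * ((ℓ₁.eval x : ℝ):ℂ) := by
  set D := max ℓ₁.natDegree w.natDegree with hD
  have h1 : ℓ₁.natDegree < D + 1 := Nat.lt_succ_of_le (le_max_left _ _)
  have h2 : w.natDegree < D + 1 := Nat.lt_succ_of_le (le_max_right _ _)
  have key : ∀ u : ℂ,
      ∑ j ∈ range (D+1),
        (((ℓ₁.coeff j : ℝ):ℂ) * ((w.eval x : ℝ):ℂ) - ((w.coeff j : ℝ):ℂ) * ((ℓ₁.eval x : ℝ):ℂ)) * u ^ j
      = (ℓ₁.map (algebraMap ℝ ℂ)).eval u * ((w.eval x : ℝ):ℂ)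
        - (w.map (algebraMap ℝ ℂ)).eval u * ((ℓ₁.eval x : ℝ):ℂ) := by
    intro u
    rw [eval_map_sum ℓ₁ D h1 u, eval_map_sum w D h2 u, sum_mul, sum_mul, ← sum_sub_distrib]
    congr 1 with j
    ring
  calc (z - (x:ℂ)) * (∑ j ∈ range (D+1),
        (((ℓ₁.coeff j : ℝ):ℂ) * ((w.eval x : ℝ):ℂ) - ((w.coeff j : ℝ):ℂ) * ((ℓ₁.eval x : ℝ):ℂ))
          * ∑ k ∈ range j, z ^ k * (x:ℂ) ^ (j - 1 - k))
      = ∑ j ∈ range (D+1),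
        (((ℓ₁.coeff j : ℝ):ℂ) * ((w.eval x : ℝ):ℂ) - ((w.coeff j : ℝ):ℂ) * ((ℓ₁.eval x : ℝ):ℂ))
          * (z ^ j - (x:ℂ) ^ j) := by
        rw [mul_sum]
        refine sum_congr rfl fun j _ => ?_
        rw [← geom_sum₂_mul z (x:ℂ) j]
        ring
    _ = (∑ j ∈ range (D+1),
          (((ℓ₁.coeff j : ℝ):ℂ) * ((w.eval x : ℝ):ℂ) - ((w.coeff j : ℝ):ℂ) * ((ℓ₁.eval x : ℝ):ℂ)) * z ^ j)
        - ∑ j ∈ range (D+1),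
          (((ℓ₁.coeff j : ℝ):ℂ) * ((w.eval x : ℝ):ℂ) - ((w.coeff j : ℝ):ℂ) * ((ℓ₁.eval x : ℝ):ℂ)) * (x:ℂ) ^ j := by
        rw [← sum_sub_distrib]
        refine sum_congr rfl fun j _ => ?_
        ring
    _ = _ := by
        rw [key z, key (x:ℂ), eval_map_coe ℓ₁ x, eval_map_coe w x]
        ring

lemma aux_diff (σ : Measure ℝ) [IsFiniteMeasure σ] (c : ℝ → ℂ) (hc : Measurable c)
    (M : ℝ) (hM : ∀ᵐ x ∂σ, ‖c x‖ ≤ M) (K : Set ℂ) (hK : IsClosed K) (hKne : K.Nonempty)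
    (hmem : ∀ᵐ (x : ℝ) ∂σ, ((x : ℂ) ∈ K)) (z₀ : ℂ) (hz₀ : z₀ ∉ K) :
    DifferentiableAt ℂ (fun z => ∫ x, c x * (z - (x : ℂ))⁻¹ ∂σ) z₀ := by
  have hδ : 0 < infDist z₀ K := (hK.notMem_iff_infDist_pos hKne).mp hz₀
  set δ := infDist z₀ K with hδdef
  have hdist : ∀ᵐ (x : ℝ) ∂σ, ∀ z ∈ ball z₀ (δ/2), δ/2 ≤ ‖z - (x:ℂ)‖ := by
    filter_upwards [hmem] with x hx z hz
    have h1 : δ ≤ dist z₀ (x:ℂ) := infDist_le_dist_of_mem hx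
    have h2 : dist z z₀ < δ/2 := mem_ball.mp hz
    have h3 : dist z₀ (x:ℂ) ≤ dist z₀ z + dist z (x:ℂ) := dist_triangle _ _ _
    have h4 : dist z₀ z = dist z z₀ := dist_comm _ _
    rw [← dist_eq_norm]
    linarith
  have hmeas : ∀ z : ℂ, AEStronglyMeasurable (fun x : ℝ => c x * (z - (x:ℂ))⁻¹) σ := fun z =>
    (hc.mul ((continuous_const.sub Complex.continuous_ofReal).measurable.inv)).aestronglyMeasurable
  have hmeas' : AEStronglyMeasurable (fun x : ℝ => c x * (-1 / (z₀ - (x:ℂ))^2)) σ :=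
    (hc.mul (((continuous_const.sub Complex.continuous_ofReal).pow 2).measurable.inv.const_mul _)).aestronglyMeasurable
  have hint : Integrable (fun x : ℝ => c x * (z₀ - (x:ℂ))⁻¹) σ := by
    apply Integrable.mono' (integrable_const (M * (δ/2)⁻¹)) (hmeas z₀)
    filter_upwards [hM, hdist] with x h1 h2
    rw [norm_mul, norm_inv]
    have h3 := h2 z₀ (mem_ball_self (by linarith))
    have h5 : ‖z₀ - (x:ℂ)‖⁻¹ ≤ (δ/2)⁻¹ := inv_anti₀ (by linarith) h3
    exact mul_le_mul h1 h5 (by positivity) (le_trans (norm_nonneg _) h1)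
  have key := hasDerivAt_integral_of_dominated_loc_of_deriv_le (μ := σ)
    (F := fun z (x : ℝ) => c x * (z - (x:ℂ))⁻¹)
    (F' := fun z (x : ℝ) => c x * (-1 / (z - (x:ℂ))^2))
    (x₀ := z₀) (s := ball z₀ (δ/2)) (bound := fun _ => M * ((δ/2)^2)⁻¹)
    (ball_mem_nhds z₀ (by linarith)) (Filter.Eventually.of_forall hmeas) hint hmeas'
    (by
      filter_upwards [hM, hdist] with x h1 h2 z hz
      have h3 := h2 z hz
      rw [norm_mul, norm_div, norm_neg, norm_one, norm_pow, one_div]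
      have h5 : (‖z - (x:ℂ)‖^2)⁻¹ ≤ ((δ/2)^2)⁻¹ := by
        apply inv_anti₀ (by positivity)
        exact pow_le_pow_left₀ (by linarith) h3 2
      exact mul_le_mul h1 h5 (by positivity) (le_trans (norm_nonneg _) h1))
    (integrable_const _)
    (by
      filter_upwards [hdist] with x h2 z hz
      have h3 := h2 z hz
      have hne : z - (x:ℂ) ≠ 0 := by
        intro h0; rw [h0, norm_zero] at h3; linarith
      have hd : HasDerivAt (fun z : ℂ => z - (x:ℂ)) 1 z := (hasDerivAt_id z).sub_const _
      simpa using (hd.inv hne).const_mul (c x))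
  exact key.2.differentiableAt

/-- m = 1: if `ℓ₀ + ℓ₁σ̂` vanishes at the zeros of `w` (so that
`(ℓ₀+ℓ₁σ̂)/w` is analytic on `ℂ∖Δ`) and `(ℓ₀+ℓ₁σ̂)(z)/w(z) = O(z^{-N})`, `N ≥ 1`, then
`(ℓ₀(z)+ℓ₁(z)σ̂(z))/w(z) = ∫ ℓ₁(x)/(z-x) · dσ(x)/w(x)` on `ℂ∖Δ` off the zeros of `w`. -/
theorem stmt4 (a b : ℝ) (hab : a ≤ b) (σ : Measure ℝ) [IsFiniteMeasure σ]
    (hsupp : msupport σ ⊆ Set.Icc a b) (hinf : (msupport σ).Infinite)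
    (ℓ₀ ℓ₁ w : Polynomial ℝ) (hw : w ≠ 0)
    (hwz : ∀ z : ℂ, (w.map (algebraMap ℝ ℂ)).IsRoot z → z ∉ (Set.Icc a b).image ((↑) : ℝ → ℂ))
    (L : ℂ → ℂ) (hL : ∀ z : ℂ, L z = (ℓ₀.map (algebraMap ℝ ℂ)).eval z
        + (ℓ₁.map (algebraMap ℝ ℂ)).eval z * cauchyT σ z)
    -- `L/w` is analytic on `ℂ∖Δ` (L vanishes with multiplicity at the zeros of w):
    (F : ℂ → ℂ) (hF : AnalyticOnNhd ℂ F ((Set.Icc a b).image ((↑) : ℝ → ℂ))ᶜ)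
    (hFW : ∀ z ∈ ((Set.Icc a b).image ((↑) : ℝ → ℂ))ᶜ,
        F z * (w.map (algebraMap ℝ ℂ)).eval z = L z)
    (N : ℕ) (hN : 1 ≤ N)
    (hbig : ∃ C R : ℝ, ∀ z : ℂ, R ≤ ‖z‖ → ‖F z‖ ≤ C / ‖z‖ ^ N) :
    ∀ z ∈ ((Set.Icc a b).image ((↑) : ℝ → ℂ))ᶜ, (w.map (algebraMap ℝ ℂ)).eval z ≠ 0 →
      L z / (w.map (algebraMap ℝ ℂ)).eval z
        = ∫ x, ((ℓ₁.eval x : ℝ) : ℂ) / ((z - (x : ℂ)) * ((w.eval x : ℝ) : ℂ)) ∂σ := by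
  -- Notation
  set K : Set ℂ := (Set.Icc a b).image ((↑) : ℝ → ℂ) with hKdef
  set wC := w.map (algebraMap ℝ ℂ) with hwCdef
  set l1C := ℓ₁.map (algebraMap ℝ ℂ) with hl1Cdef
  set l0C := ℓ₀.map (algebraMap ℝ ℂ) with hl0Cdef
  have hKcpt : IsCompact K := isCompact_Icc.image Complex.continuous_ofReal
  have hKcl : IsClosed K := hKcpt.isClosed
  have hKne : K.Nonempty := ⟨(a : ℂ), a, Set.left_mem_Icc.mpr hab, rfl⟩
  have hae : ∀ᵐ x ∂σ, x ∈ Set.Icc a b := msupport_ae σ hsupp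
  have haeK : ∀ᵐ (x : ℝ) ∂σ, ((x : ℂ) ∈ K) := hae.mono fun x hx => ⟨x, hx, rfl⟩
  -- w has no zeros on [a,b]
  have hwK : ∀ x ∈ Set.Icc a b, w.eval x ≠ 0 := by
    intro x hx h0
    exact hwz (x : ℂ) (by rw [IsRoot, eval_map_coe, h0, Complex.ofReal_zero]) ⟨x, hx, rfl⟩
  -- lower bound for |w| on [a,b]
  obtain ⟨x₀, hx₀, hmin⟩ := isCompact_Icc.exists_isMinOn (Set.nonempty_Icc.mpr hab)
    (continuous_abs.comp w.continuous_aeval).continuousOn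
  set ε := |w.eval x₀| with hεdef
  have hε : 0 < ε := abs_pos.mpr (hwK x₀ hx₀)
  have hεle : ∀ x ∈ Set.Icc a b, ε ≤ |w.eval x| := fun x hx => hmin hx
  -- upper bound for |ℓ₁| on [a,b]
  obtain ⟨M, hM⟩ := (isCompact_Icc (a := a) (b := b)).exists_bound_of_continuousOn
    (ℓ₁.continuous_aeval).continuousOn
  have hM0 : 0 ≤ M := le_trans (norm_nonneg _) (hM a (Set.left_mem_Icc.mpr hab))
  -- the density c and the Cauchy-type integral G
  set c : ℝ → ℂ := fun x => ((ℓ₁.eval x : ℝ):ℂ) / ((w.eval x : ℝ):ℂ) with hcdef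
  have hc : Measurable c :=
    (Complex.continuous_ofReal.comp ℓ₁.continuous_aeval).measurable.div
      (Complex.continuous_ofReal.comp w.continuous_aeval).measurable
  have hcbd : ∀ᵐ x ∂σ, ‖c x‖ ≤ M / ε := by
    filter_upwards [hae] with x hx
    rw [hcdef]
    simp only [norm_div, Complex.norm_real]
    exact div_le_div₀ (by exact hM0) (hM x hx) hε (hεle x hx)
  set G : ℂ → ℂ := fun z => ∫ x, c x * (z - (x:ℂ))⁻¹ ∂σ with hGdef
  have hGdiff : ∀ z ∉ K, DifferentiableAt ℂ G z := fun z hz =>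
    aux_diff σ c hc (M/ε) hcbd K hKcl hKne haeK z hz
  -- generic integrability helper
  have hIntegrable : ∀ f : ℝ → ℂ, AEStronglyMeasurable f σ →
      (∃ C, ∀ x ∈ Set.Icc a b, ‖f x‖ ≤ C) → Integrable f σ := by
    rintro f hf ⟨C, hC⟩
    exact Integrable.mono' (integrable_const C) hf (hae.mono fun x hx => hC x hx)
  -- distance bound for z off K
  have hdistK : ∀ z ∉ K, ∀ x ∈ Set.Icc a b, infDist z K ≤ ‖z - (x:ℂ)‖ := by
    intro z hz x hx
    rw [← dist_eq_norm]
    exact infDist_le_dist_of_mem ⟨x, hx, rfl⟩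
  have hdpos : ∀ z ∉ K, 0 < infDist z K := fun z hz =>
    (hKcl.notMem_iff_infDist_pos hKne).mp hz
  have hzx_ne : ∀ z, z ∉ K → ∀ x ∈ Set.Icc a b, z - (x:ℂ) ≠ 0 := by
    intro z hz x hx h0
    have := hdistK z hz x hx
    rw [h0, norm_zero] at this
    linarith [hdpos z hz]
  -- the polynomial kernel q
  set D := max ℓ₁.natDegree w.natDegree with hDdef
  set pc : ℕ → ℝ → ℂ := fun j x =>
    ((ℓ₁.coeff j : ℝ):ℂ) * ((w.eval x : ℝ):ℂ) - ((w.coeff j : ℝ):ℂ) * ((ℓ₁.eval x : ℝ):ℂ) with hpcdef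
  set q : ℂ → ℝ → ℂ := fun z x =>
    ∑ j ∈ range (D+1), pc j x * ∑ k ∈ range j, z ^ k * (x:ℂ) ^ (j - 1 - k) with hqdef
  have hq1 : ∀ (z : ℂ) (x : ℝ), (z - (x:ℂ)) * q z x
      = l1C.eval z * ((w.eval x : ℝ):ℂ) - wC.eval z * ((ℓ₁.eval x : ℝ):ℂ) :=
    fun z x => aux_q ℓ₁ w z x
  have hpccont : ∀ j, Continuous fun x : ℝ => pc j x := fun j =>
    (continuous_const.mul (Complex.continuous_ofReal.comp w.continuous_aeval)).sub
      (continuous_const.mul (Complex.continuous_ofReal.comp ℓ₁.continuous_aeval))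
  have hqcont : ∀ z : ℂ, Continuous fun x : ℝ => q z x := by
    intro z
    apply continuous_finset_sum
    intro j _
    exact (hpccont j).mul (continuous_finset_sum _ fun k _ =>
      continuous_const.mul (Complex.continuous_ofReal.pow _))
  have hwCcont : Continuous fun x : ℝ => ((w.eval x : ℝ):ℂ) :=
    Complex.continuous_ofReal.comp w.continuous_aeval
  have hwne' : ∀ x ∈ Set.Icc a b, ((w.eval x : ℝ):ℂ) ≠ 0 := fun x hx =>
    Complex.ofReal_ne_zero.mpr (hwK x hx)
  -- integrability of continuous-on-Icc measurable functions
  have hIntCont : ∀ f : ℝ → ℂ, Measurable f → ContinuousOn f (Set.Icc a b) → Integrable f σ := by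
    intro f hfm hfc
    obtain ⟨C, hC⟩ := isCompact_Icc.exists_bound_of_continuousOn hfc
    exact hIntegrable f hfm.aestronglyMeasurable ⟨C, hC⟩
  -- E
  set E : ℂ → ℂ := fun z => l0C.eval z + ∫ x, q z x / ((w.eval x : ℝ):ℂ) ∂σ with hEdef
  have hqw_meas : ∀ z : ℂ, Measurable fun x : ℝ => q z x / ((w.eval x : ℝ):ℂ) := fun z =>
    (hqcont z).measurable.div hwCcont.measurable
  have hqw_int : ∀ z : ℂ, Integrable (fun x : ℝ => q z x / ((w.eval x : ℝ):ℂ)) σ := by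
    intro z
    exact hIntCont _ (hqw_meas z)
      (((hqcont z).continuousOn).div hwCcont.continuousOn hwne')
  have ht_meas : ∀ j k : ℕ, Measurable fun x : ℝ => pc j x * (x:ℂ)^(j-1-k) / ((w.eval x : ℝ):ℂ) :=
    fun j k => ((hpccont j).mul (Complex.continuous_ofReal.pow _)).measurable.div hwCcont.measurable
  have ht_int : ∀ j k : ℕ, Integrable (fun x : ℝ => pc j x * (x:ℂ)^(j-1-k) / ((w.eval x : ℝ):ℂ)) σ := by
    intro j k
    exact hIntCont _ (ht_meas j k)
      ((((hpccont j).mul (Complex.continuous_ofReal.pow _)).continuousOn).div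
        hwCcont.continuousOn hwne')
  -- E is a polynomial-type function
  have hEeq : ∀ z : ℂ, (∫ x, q z x / ((w.eval x : ℝ):ℂ) ∂σ)
      = ∑ j ∈ range (D+1), ∑ k ∈ range j,
          z ^ k * ∫ x, pc j x * (x:ℂ)^(j-1-k) / ((w.eval x : ℝ):ℂ) ∂σ := by
    intro z
    have hsplit : ∀ x : ℝ, q z x / ((w.eval x : ℝ):ℂ)
        = ∑ j ∈ range (D+1), ∑ k ∈ range j,
            z ^ k * (pc j x * (x:ℂ)^(j-1-k) / ((w.eval x : ℝ):ℂ)) := by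
      intro x
      rw [hqdef]
      simp only
      rw [sum_div]
      refine sum_congr rfl fun j _ => ?_
      rw [mul_sum, sum_div]
      refine sum_congr rfl fun k _ => ?_
      ring
    simp only [hsplit]
    rw [integral_finset_sum]
    · refine sum_congr rfl fun j _ => ?_
      rw [integral_finset_sum]
      · exact sum_congr rfl fun k _ => integral_const_mul _ _
      · exact fun k _ => (ht_int j k).const_mul _
    · intro j _
      exact integrable_finset_sum _ fun k _ => (ht_int j k).const_mul _
  have hEdiff : Differentiable ℂ E := by
    have hE2 : E = fun z => l0C.eval z + ∑ j ∈ range (D+1), ∑ k ∈ range j,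
        z ^ k * ∫ x, pc j x * (x:ℂ)^(j-1-k) / ((w.eval x : ℝ):ℂ) ∂σ := by
      funext z
      rw [hEdef]
      simp only
      rw [hEeq z]
    rw [hE2]
    apply (l0C.differentiable).add
    apply Differentiable.fun_sum
    intro j _
    apply Differentiable.fun_sum
    intro k _
    exact (differentiable_pow k).mul_const _
  -- main pointwise identity off K and off zeros of w
  have hMain : ∀ z, z ∉ K → wC.eval z ≠ 0 → wC.eval z * (F z - G z) = E z := by
    intro z hz hwz'
    have h1 : wC.eval z * F z = L z := by rw [mul_comm]; exact hFW z hz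
    have hint1 : Integrable (fun x : ℝ => l1C.eval z * (z - (x:ℂ))⁻¹) σ := by
      apply hIntCont
      · exact (((continuous_const.sub Complex.continuous_ofReal)).measurable.inv).const_mul _
      · apply ContinuousOn.mul continuousOn_const
        apply ContinuousOn.inv₀ (continuous_const.sub Complex.continuous_ofReal).continuousOn
        exact fun x hx => hzx_ne z hz x hx
    have hint2 : Integrable (fun x : ℝ => wC.eval z * (c x * (z - (x:ℂ))⁻¹)) σ := by
      apply hIntCont
      · exact (hc.mul ((continuous_const.sub Complex.continuous_ofReal)).measurable.inv).const_mul _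
      · apply ContinuousOn.mul continuousOn_const
        apply ContinuousOn.mul
        · exact ((Complex.continuous_ofReal.comp ℓ₁.continuous_aeval).continuousOn).div
            hwCcont.continuousOn hwne'
        · exact ContinuousOn.inv₀ (continuous_const.sub Complex.continuous_ofReal).continuousOn
            (fun x hx => hzx_ne z hz x hx)
    have h2 : l1C.eval z * cauchyT σ z - wC.eval z * G z
        = ∫ x, (l1C.eval z * (z - (x:ℂ))⁻¹ - wC.eval z * (c x * (z - (x:ℂ))⁻¹)) ∂σ := by
      rw [integral_sub hint1 hint2, integral_const_mul, integral_const_mul]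
      rfl
    have h3 : (∫ x, (l1C.eval z * (z - (x:ℂ))⁻¹ - wC.eval z * (c x * (z - (x:ℂ))⁻¹)) ∂σ)
        = ∫ x, q z x / ((w.eval x : ℝ):ℂ) ∂σ := by
      apply integral_congr_ae
      filter_upwards [hae] with x hx
      have hzxne := hzx_ne z hz x hx
      have hwx := hwne' x hx
      have hq : q z x = (l1C.eval z * ((w.eval x : ℝ):ℂ) - wC.eval z * ((ℓ₁.eval x : ℝ):ℂ))
          / (z - (x:ℂ)) := by
        rw [eq_div_iff hzxne, mul_comm]
        exact hq1 z x
      rw [hq, hcdef]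
      field_simp
    rw [hL z] at h1
    rw [mul_sub, h1, hEdef]
    simp only
    rw [add_sub_assoc, h2, h3]
  -- extend to the zeros of w by continuity
  have hRoots : ∀ z₀ : ℂ, wC.eval z₀ = 0 → ∀ᶠ z in nhdsWithin z₀ {z₀}ᶜ, wC.eval z ≠ 0 := by
    intro z₀ h0
    have hwC0 : wC ≠ 0 := (Polynomial.map_ne_zero_iff (algebraMap ℝ ℂ).injective).mpr hw
    set T : Set ℂ := (wC.roots.toFinset : Set ℂ) with hTdef
    have hTfin : T.Finite := wC.roots.toFinset.finite_toSet
    have hTcl : IsClosed (T \ {z₀}) := (hTfin.subset Set.diff_subset).isClosed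
    have hz₀T : z₀ ∉ T \ {z₀} := fun h => h.2 rfl
    have hmem : (T \ {z₀})ᶜ ∈ nhds z₀ := hTcl.isOpen_compl.mem_nhds hz₀T
    rw [eventually_nhdsWithin_iff]
    filter_upwards [hmem] with z hzT hzz₀
    intro h0'
    apply hzT
    constructor
    · rw [hTdef]
      simp only [Finset.coe_sort_coe, Finset.mem_coe, Multiset.mem_toFinset]
      rw [mem_roots hwC0]
      exact h0'
    · exact hzz₀
  have hMainAll : ∀ z, z ∉ K → wC.eval z * (F z - G z) = E z := by
    intro z₀ hz₀
    by_cases h0 : wC.eval z₀ = 0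
    · haveI : (nhdsWithin z₀ {z₀}ᶜ).NeBot := by infer_instance
      have hcontφ : ContinuousAt (fun z => wC.eval z * (F z - G z)) z₀ := by
        apply ContinuousAt.mul (wC.continuous.continuousAt)
        exact ((hF z₀ hz₀).continuousAt).sub (hGdiff z₀ hz₀).continuousAt
      have hev : ∀ᶠ z in nhdsWithin z₀ {z₀}ᶜ, wC.eval z * (F z - G z) = E z := by
        have hKev : ∀ᶠ z in nhdsWithin z₀ {z₀}ᶜ, z ∉ K :=
          eventually_nhdsWithin_of_eventually_nhds (hKcl.isOpen_compl.eventually_mem hz₀)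
        filter_upwards [hKev, hRoots z₀ h0] with z h1 h2
        exact hMain z h1 h2
      have t1 : Tendsto (fun z => wC.eval z * (F z - G z)) (nhdsWithin z₀ {z₀}ᶜ)
          (nhds (wC.eval z₀ * (F z₀ - G z₀))) := hcontφ.continuousWithinAt
      have t2 : Tendsto E (nhdsWithin z₀ {z₀}ᶜ) (nhds (E z₀)) :=
        hEdiff.continuous.continuousAt.continuousWithinAt
      exact tendsto_nhds_unique (t1.congr' hev) t2
    · exact hMain z₀ hz₀ h0
  -- the entire function GG
  set GG : ℂ → ℂ := fun z => if wC.eval z = 0 then F z - G z else E z / wC.eval z with hGGdef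
  have hGGdiff : Differentiable ℂ GG := by
    intro z₁
    by_cases h0 : wC.eval z₁ = 0
    · have hz₁K : z₁ ∉ K := hwz z₁ h0
      have hev : GG =ᶠ[nhds z₁] fun z => F z - G z := by
        filter_upwards [hKcl.isOpen_compl.eventually_mem hz₁K] with z hz
        by_cases h : wC.eval z = 0
        · simp only [hGGdef, if_pos h]
        · simp only [hGGdef, if_neg h]
          rw [← hMainAll z hz, mul_div_cancel_left₀ _ h]
      have hd : DifferentiableAt ℂ (fun z => F z - G z) z₁ :=
        ((hF z₁ hz₁K).differentiableAt).sub (hGdiff z₁ hz₁K)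
      exact hd.congr_of_eventuallyEq hev
    · have hne : ∀ᶠ z in nhds z₁, wC.eval z ≠ 0 :=
        (wC.continuous.continuousAt).eventually_ne h0
      have hev : GG =ᶠ[nhds z₁] fun z => E z / wC.eval z := by
        filter_upwards [hne] with z hz
        simp only [hGGdef, if_neg hz]
      have hd : DifferentiableAt ℂ (fun z => E z / wC.eval z) z₁ :=
        (hEdiff z₁).div (wC.differentiable z₁) h0
      exact hd.congr_of_eventuallyEq hev
  -- GG tends to 0 at infinity
  have hGGlim : Tendsto GG (cocompact ℂ) (nhds 0) := by
    obtain ⟨C, R, hCR⟩ := hbig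
    have hwC0 : wC ≠ 0 := (Polynomial.map_ne_zero_iff (algebraMap ℝ ℂ).injective).mpr hw
    set S := (σ Set.univ).toReal with hSdef
    have hS0 : 0 ≤ S := ENNReal.toReal_nonneg
    set r := max |a| |b| with hrdef
    have hr0 : 0 ≤ r := le_trans (abs_nonneg a) (le_max_left _ _)
    have hxr : ∀ x ∈ Set.Icc a b, ‖(x:ℂ)‖ ≤ r := by
      intro x hx
      rw [Complex.norm_real, Real.norm_eq_abs]
      exact abs_le_max_abs_abs hx.1 hx.2
    have hTfin : (↑(wC.roots.toFinset) : Set ℂ).Finite := wC.roots.toFinset.finite_toSet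
    have hcpt : IsCompact (K ∪ ↑(wC.roots.toFinset)) := hKcpt.union hTfin.isCompact
    have hev1 : ∀ᶠ z in cocompact ℂ, z ∉ K ∧ wC.eval z ≠ 0 := by
      filter_upwards [hcpt.compl_mem_cocompact] with z hz
      constructor
      · exact fun h => hz (Or.inl h)
      · intro h0
        apply hz
        right
        simp only [Finset.coe_sort_coe, Finset.mem_coe, Multiset.mem_toFinset]
        rw [mem_roots hwC0]
        exact h0
    have hGGev : ∀ᶠ z in cocompact ℂ, GG z = F z - G z := by
      filter_upwards [hev1] with z hz
      obtain ⟨h1, h2⟩ := hz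
      simp only [hGGdef, if_neg h2]
      rw [← hMainAll z h1, mul_div_cancel_left₀ _ h2]
    set C' := max C 0 with hC'def
    have hC'0 : 0 ≤ C' := le_max_right _ _
    have hFlim : Tendsto F (cocompact ℂ) (nhds 0) := by
      apply squeeze_zero_norm'
        (a := fun z : ℂ => C' / ‖z‖)
      · have hnorm : ∀ᶠ z : ℂ in cocompact ℂ, max R 1 ≤ ‖z‖ :=
          tendsto_norm_cocompact_atTop.eventually_ge_atTop _
        filter_upwards [hnorm] with z hz
        have hz1 : (1:ℝ) ≤ ‖z‖ := le_trans (le_max_right _ _) hz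
        have hzpos : (0:ℝ) < ‖z‖ := lt_of_lt_of_le one_pos hz1
        have hzR : R ≤ ‖z‖ := by
          exact le_trans (le_max_left _ _) hz
        have h1 : ‖F z‖ ≤ C / ‖z‖ ^ N := hCR z hzR
        have h2 : C / ‖z‖ ^ N ≤ C' / ‖z‖ ^ N := by
          apply div_le_div_of_nonneg_right ?_ (by positivity)
          exact le_max_left _ _
        have h3 : C' / ‖z‖ ^ N ≤ C' / ‖z‖ := by
          apply div_le_div_of_nonneg_left hC'0 hzpos
          exact le_self_pow₀ hz1 (by omega)
        exact le_trans h1 (le_trans h2 h3)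
      · exact tendsto_const_nhds.div_atTop tendsto_norm_cocompact_atTop
    have hGlim : Tendsto G (cocompact ℂ) (nhds 0) := by
      apply squeeze_zero_norm'
        (a := fun z : ℂ => (2 * (M/ε) * S) / ‖z‖)
      · have hnorm : ∀ᶠ z : ℂ in cocompact ℂ, max (2*r) 1 ≤ ‖z‖ :=
          tendsto_norm_cocompact_atTop.eventually_ge_atTop _
        filter_upwards [hnorm] with z hz
        have hz1 : (1:ℝ) ≤ ‖z‖ := le_trans (le_max_right _ _) hz
        have hzpos : (0:ℝ) < ‖z‖ := lt_of_lt_of_le one_pos hz1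
        have hz2r : 2*r ≤ ‖z‖ := le_trans (le_max_left _ _) hz
        have hMε : 0 ≤ M/ε := div_nonneg hM0 hε.le
        have hbd : ∀ᵐ x ∂σ, ‖c x * (z - (x:ℂ))⁻¹‖ ≤ (M/ε) * (2/‖z‖) := by
          filter_upwards [hcbd, hae] with x h1 h2
          rw [norm_mul, norm_inv]
          have hx := hxr x h2
          have hsub := norm_sub_norm_le z ((x:ℝ):ℂ)
          have h3 : ‖z‖/2 ≤ ‖z - ((x:ℝ):ℂ)‖ := by linarith
          have h4 : ‖z - ((x:ℝ):ℂ)‖⁻¹ ≤ (‖z‖/2)⁻¹ := inv_anti₀ (by linarith) h3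
          have h5 : (‖z‖/2)⁻¹ = 2/‖z‖ := by rw [inv_div]
          rw [← h5]
          exact mul_le_mul h1 h4 (inv_nonneg.mpr (norm_nonneg _)) hMε
        have hGbd : ‖G z‖ ≤ ((M/ε) * (2/‖z‖)) * S := by
          rw [hGdef]
          exact norm_integral_le_of_norm_le_const hbd
        calc ‖G z‖ ≤ ((M/ε) * (2/‖z‖)) * S := hGbd
          _ = (2 * (M/ε) * S) / ‖z‖ := by ring
      · exact tendsto_const_nhds.div_atTop tendsto_norm_cocompact_atTop
    have hsub : Tendsto (fun z => F z - G z) (cocompact ℂ) (nhds 0) := by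
      simpa using hFlim.sub hGlim
    exact hsub.congr' (hGGev.mono fun z hz => hz.symm)
  -- conclude
  intro z hzK hwz'
  have hGG0 : GG z = 0 := hGGdiff.apply_eq_of_tendsto_cocompact z hGGlim
  have hE0 : E z = 0 := by
    simp only [hGGdef, if_neg hwz'] at hGG0
    exact (div_eq_zero_iff.mp hGG0).resolve_right hwz'
  have hFG : F z = G z := by
    have h := hMainAll z hzK
    rw [hE0] at h
    exact sub_eq_zero.mp ((mul_eq_zero.mp h).resolve_left hwz')
  have hLF : L z / wC.eval z = F z := by
    rw [← hFW z hzK, mul_div_cancel_right₀ _ hwz']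
  rw [hLF, hFG, hGdef]
  apply integral_congr_ae
  apply Filter.Eventually.of_forall
  intro x
  rw [hcdef]
  simp only [div_eq_mul_inv, mul_inv]
  ring
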